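/- Let F : ℝ^d → ℝ be twice continuously differentiable, and let L0 > 0 and L1 ≥ 0 be constants such that for all x, y ∈ ℝ^d with ‖x − y‖ ≤ 1/L1 (this constraint being vacuous when L1 = 0) one has ‖∇F(x) − ∇F(y)‖ ≤ (L0 + L1‖∇F(x)‖)·‖x − y‖. Then for every x ∈ ℝ^d, the operator norm of the Hessian satisfies ‖∇²F(x)‖ ≤ L0 + L1‖∇F(x)‖. -/
import Mathlib


/- STATEMENT 0: If F : ℝ^d → ℝ is C², L0 > 0, L1 ≥ 0, and
   ‖∇F(x) − ∇F(y)‖ ≤ (L0 + L1‖∇F(x)‖)‖x − y‖ whenever ‖x − y‖ ≤ 1/L1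
   (the constraint, encoded as L1·‖x − y‖ ≤ 1, being vacuous when L1 = 0),
   then ‖∇²F(x)‖ ≤ L0 + L1‖∇F(x)‖ for every x.  The Hessian at x is the
   (operator-norm-measured) derivative of the gradient map. -/
theorem hessian_bound_of_L0L1_smooth {d : ℕ}
    (F : EuclideanSpace ℝ (Fin d) → ℝ) (hF : ContDiff ℝ 2 F)
    (L0 L1 : ℝ) (hL0 : 0 < L0) (hL1 : 0 ≤ L1)
    (hsmooth : ∀ x y : EuclideanSpace ℝ (Fin d), L1 * ‖x - y‖ ≤ 1 →
      ‖gradient F x - gradient F y‖ ≤ (L0 + L1 * ‖gradient F x‖) * ‖x - y‖) :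
    ∀ x : EuclideanSpace ℝ (Fin d),
      ‖fderiv ℝ (gradient F) x‖ ≤ L0 + L1 * ‖gradient F x‖ := by
  intro x
  have hC : 0 ≤ L0 + L1 * ‖gradient F x‖ := by positivity
  refine norm_fderiv_le_of_lip' ℝ hC ?_
  have hε : (0:ℝ) < 1 / (L1 + 1) := by positivity
  filter_upwards [Metric.ball_mem_nhds x hε] with y hy
  rw [Metric.mem_ball, dist_eq_norm] at hy
  have h1 : L1 * ‖x - y‖ ≤ 1 := by
    rw [norm_sub_rev]
    calc L1 * ‖y - x‖ ≤ L1 * (1 / (L1 + 1)) := by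
          exact mul_le_mul_of_nonneg_left hy.le hL1
      _ ≤ 1 := by
          rw [mul_one_div, div_le_one (by linarith)]; linarith
  have := hsmooth x y h1
  rwa [norm_sub_rev (gradient F x), norm_sub_rev x] at this
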